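/- There exists a class ℒ of recursive languages such that ℒ ∈ [TxtItEx_C]_REC but ℒ ∉ [TxtGCIndBc_C]_REC; that is, some partial computable iterative learner Ex_C-learns every member of ℒ, but no partial computable Gold-style (full-information) learner that outputs only C-indices on texts of languages in ℒ can Bc_C-learn every member of ℒ. -/

import Mathlib

namespace InductiveInference

/-- `φ_e` : the `e`-th partial computable function, via the standard numbering
of `Nat.Partrec.Code`. -/
def phi (e : ℕ) : ℕ →. ℕ := (Denumerable.ofNat Nat.Partrec.Code e).eval

/-- `W_e` : the domain of `φ_e`. -/
def Wset (e : ℕ) : Set ℕ := (phi e).Dom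

/-- `e` is a C-index: `φ_e` is total with values in `{0,1}`. -/
def CIndex (e : ℕ) : Prop := ∀ x, phi e x = Part.some 0 ∨ phi e x = Part.some 1

/-- `C_e = {x | φ_e x = 1}`. -/
def Cset (e : ℕ) : Set ℕ := {x | phi e x = Part.some 1}

/-- A language is recursive (decidable). -/
def RecLang (L : Set ℕ) : Prop := ∃ f : ℕ → Bool, Computable f ∧ ∀ x, x ∈ L ↔ f x = true

/-- Texts: total functions `ℕ → ℕ ∪ {#}`; `none` is the pause symbol `#`. -/
abbrev Text := ℕ → Option ℕ

/-- The content of a text: its range minus the pause symbol. -/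
def content (T : Text) : Set ℕ := {x | ∃ n, T n = some x}

/-- The initial segment `T[n] = (T 0, …, T (n-1))`. -/
def initSeg (T : Text) (n : ℕ) : List (Option ℕ) := (List.range n).map T

/-- The (finite) content of the initial segment `T[n]`. -/
def fincontent (T : Text) (n : ℕ) : Finset ℕ := ((initSeg T n).filterMap id).toFinset

/-- A canonical numerical code for a finite set of naturals. -/
def setCode (D : Finset ℕ) : ℕ := Encodable.encode (D.sort (· ≤ ·))

/-- Learners: partial functions on (suitably coded) natural number inputs. -/
abbrev Learner := ℕ →. ℕ

/-- The learner is partial computable. -/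
def PartComputable (h : Learner) : Prop := Nat.Partrec h

/-- The learner is total computable. -/
def TotalComputable (h : Learner) : Prop := Nat.Partrec h ∧ ∀ x, (h x).Dom

/-- Hypothesis sequences (possibly undefined at some points). -/
abbrev HypSeq := ℕ → Part ℕ

/-- Gold-style (full-information) learning: `G(h,T)(i) = h(T[i])`. -/
def Gop (h : Learner) (T : Text) (i : ℕ) : Part ℕ :=
  h (Encodable.encode (initSeg T i))

/-- Partially set-driven learning: `Psd(h,T)(i) = h(content T[i], i)`. -/
def Psdop (h : Learner) (T : Text) (i : ℕ) : Part ℕ :=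
  h (Nat.pair (setCode (fincontent T i)) i)

/-- Set-driven learning: `Sd(h,T)(i) = h(content T[i])`. -/
def Sdop (h : Learner) (T : Text) (i : ℕ) : Part ℕ :=
  h (setCode (fincontent T i))

/-- Iterative learning: the input `none` codes the empty start sequence `ε`,
and `some (e, x)` codes the pair of previous hypothesis `e` and datum `x`. -/
def Itop (h : Learner) (T : Text) : ℕ → Part ℕ
  | 0 => h (Encodable.encode (none : Option (ℕ × Option ℕ)))
  | i + 1 => (Itop h T i).bind fun e =>
      h (Encodable.encode (some (e, T i) : Option (ℕ × Option ℕ)))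

/-- Transductive learning: the learner receives the single (coded) datum
`T i`; the output `0` codes the distinguished symbol `?`, and the output
`e + 1` codes the hypothesis `e`.  The value `?` of the hypothesis sequence
is represented by `Part.none`. -/
def Tdop (h : Learner) (T : Text) : ℕ → Part ℕ
  | 0 => Part.none
  | i + 1 => (h (Encodable.encode (T i))).bind fun v =>
      match v with
      | 0 => Tdop h T i
      | e + 1 => Part.some e

/-- `Ex_C`: syntactic convergence to a single correct C-index. -/
def ExC (p : HypSeq) (T : Text) : Prop :=
  ∃ n₀, (∀ n, n₀ ≤ n → p n = p n₀) ∧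
    ∃ e, p n₀ = Part.some e ∧ CIndex e ∧ Cset e = content T

/-- `Ex_W`: syntactic convergence to a single correct W-index. -/
def ExW (p : HypSeq) (T : Text) : Prop :=
  ∃ n₀, (∀ n, n₀ ≤ n → p n = p n₀) ∧
    ∃ e, p n₀ = Part.some e ∧ Wset e = content T

/-- `Bc_C`: semantic convergence to correct C-indices. -/
def BcC (p : HypSeq) (T : Text) : Prop :=
  ∃ n₀, ∀ n, n₀ ≤ n → ∃ e, p n = Part.some e ∧ CIndex e ∧ Cset e = content T

/-- `Bc_W`: semantic convergence to correct W-indices. -/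
def BcW (p : HypSeq) (T : Text) : Prop :=
  ∃ n₀, ∀ n, n₀ ≤ n → ∃ e, p n = Part.some e ∧ Wset e = content T

/-- `CInd`: every hypothesis output is a C-index. -/
def CIndRes (p : HypSeq) (_T : Text) : Prop :=
  ∀ i e, p i = Part.some e → CIndex e

/-- `T`: the always-true restriction. -/
def TrueRes (_p : HypSeq) (_T : Text) : Prop := True

abbrev InteractionOp := Learner → Text → HypSeq
abbrev Restriction := HypSeq → Text → Prop

/-- Conjunction of restrictions. -/
def andRes (δ δ' : Restriction) : Restriction := fun p T => δ p T ∧ δ' p T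

/-- `h` `Txtβδ`-learns `L`: on every text for `L` the restriction `δ` holds. -/
def Learns (β : InteractionOp) (δ : Restriction) (h : Learner) (L : Set ℕ) : Prop :=
  ∀ T : Text, content T = L → δ (β h T) T

/-- The restriction `α` holds for `h` on all texts whatsoever. -/
def OnAllTexts (β : InteractionOp) (α : Restriction) (h : Learner) : Prop :=
  ∀ T : Text, α (β h T) T

/-- A class of recursive languages. -/
def IsRecClass (ℒ : Set (Set ℕ)) : Prop := ∀ L ∈ ℒ, RecLang L

/-- `[𝒞Txtβδ]_REC`: classes of recursive languages learnable by some
learner from `C` under interaction operator `β` and restriction `δ`. -/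
def LearnableREC (C : Learner → Prop) (β : InteractionOp) (δ : Restriction) :
    Set (Set (Set ℕ)) :=
  {ℒ | IsRecClass ℒ ∧ ∃ h, C h ∧ ∀ L ∈ ℒ, Learns β δ h L}

/-- `[τ(α)𝒞Txtβδ]_REC`: as above, where additionally `α` must hold on
arbitrary texts. -/
def TauLearnableREC (C : Learner → Prop) (α : Restriction) (β : InteractionOp)
    (δ : Restriction) : Set (Set (Set ℕ)) :=
  {ℒ | IsRecClass ℒ ∧ ∃ h, C h ∧ OnAllTexts β α h ∧ ∀ L ∈ ℒ, Learns β δ h L}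

section Separation

open Nat.Partrec (Code)
open Nat.Partrec.Code

/-! ### Elements of the constructed languages -/

def pl (e s : ℕ) : ℕ := Nat.pair e (Nat.pair 0 s)
def qn (e s : ℕ) : ℕ := Nat.pair e (Nat.pair 1 s)
def tw (e s j : ℕ) : ℕ := Nat.pair e (Nat.pair 2 (Nat.pair s j))

/-- State of the construction: emitted elements, prefix pointer, pending query. -/
abbrev St : Type := List ℕ × ℕ × Option (ℕ × ℕ)

/-- The coded initial segment of length `m` of the text enumerating `l`. -/
def inputOf (l : List ℕ) (m : ℕ) : ℕ :=
  Encodable.encode ((List.range m).map fun i => Option.some (l.getD i 0))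

theorem inputOf_eq_take {l : List ℕ} {m : ℕ} (h : m ≤ l.length) :
    inputOf l m = Encodable.encode ((l.take m).map Option.some) := by
  unfold inputOf
  congr 1
  apply List.ext_getElem?
  intro n
  rw [List.getElem?_map, List.getElem?_map]
  by_cases hn : n < m
  · have hn2 : n < l.length := by omega
    rw [List.getElem?_range hn, List.getElem?_take_of_lt hn, List.getElem?_eq_getElem hn2]
    simp only [Option.map_some]
    rw [List.getD_eq_getElem?_getD, List.getElem?_eq_getElem hn2]
    rfl
  · rw [List.getElem?_eq_none (by simpa using hn), List.getElem?_eq_none]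
    · rfl
    · simp
      omega

def qtest (e s q : ℕ) (l : List ℕ) (m : ℕ) : Bool :=
  decide (q < m) && (evaln s (Denumerable.ofNat Code e) (inputOf l m)).isSome

def waitIdx (e s q : ℕ) (l : List ℕ) : ℕ :=
  (List.range (l.length + 1)).findIdx (qtest e s q l)

def step (e s : ℕ) (st : St) : St :=
  Option.casesOn st.2.2
    (Option.casesOn
       (if waitIdx e s st.2.1 (st.1 ++ [pl e s]) < (st.1 ++ [pl e s]).length + 1 then
          evaln s (Denumerable.ofNat Code e)
            (inputOf (st.1 ++ [pl e s]) (waitIdx e s st.2.1 (st.1 ++ [pl e s])))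
        else none)
       (st.1 ++ [pl e s], st.2.1, none)
       (fun p => (st.1 ++ [pl e s], waitIdx e s st.2.1 (st.1 ++ [pl e s]), some (p, s))))
    (fun pt =>
      Option.casesOn (evaln s (Denumerable.ofNat Code pt.1) (qn e pt.2))
        st
        (fun v => (if v = 0 then st.1 ++ [qn e pt.2] else st.1, st.2.1, none)))

def sim (e : ℕ) : ℕ → St
  | 0 => ([], 0, none)
  | s + 1 => step e s (sim e s)

def sigs (e s : ℕ) : List ℕ := (sim e s).1
def qs (e s : ℕ) : ℕ := (sim e s).2.1
def ms (e s : ℕ) : Option (ℕ × ℕ) := (sim e s).2.2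

theorem sim_zero (e : ℕ) : sim e 0 = ([], 0, none) := rfl
theorem ms_zero (e : ℕ) : ms e 0 = none := rfl
theorem sim_succ (e s : ℕ) : sim e (s + 1) = step e s (sim e s) := rfl
theorem sim_eta (e s : ℕ) : sim e s = (sigs e s, qs e s, ms e s) := rfl

/-- Wait step: the pool element is always emitted. -/
theorem wait_sigma {e s : ℕ} (h : ms e s = none) :
    sigs e (s + 1) = sigs e s ++ [pl e s] := by
  have h1 : sim e (s+1) = step e s (sigs e s, qs e s, ms e s) := rfl
  rw [h] at h1
  unfold sigs
  rw [h1]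
  unfold step
  dsimp only
  cases hif : (if waitIdx e s (qs e s) (sigs e s ++ [pl e s]) < (sigs e s ++ [pl e s]).length + 1 then
          evaln s (Denumerable.ofNat Code e)
            (inputOf (sigs e s ++ [pl e s]) (waitIdx e s (qs e s) (sigs e s ++ [pl e s])))
        else none) <;> simp [sigs]

theorem wait_cases {e s : ℕ} (h : ms e s = none) :
    (ms e (s + 1) = none ∧ qs e (s + 1) = qs e s) ∨
    (∃ p, ms e (s + 1) = some (p, s) ∧ qs e s < qs e (s + 1) ∧
      qs e (s + 1) ≤ (sigs e (s + 1)).length ∧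
      evaln s (Denumerable.ofNat Code e) (inputOf (sigs e (s + 1)) (qs e (s + 1))) = some p) := by
  have h1 : sim e (s+1) = step e s (sigs e s, qs e s, ms e s) := rfl
  rw [h] at h1
  have hσ := wait_sigma h
  set l : List ℕ := sigs e s ++ [pl e s] with hl
  set i : ℕ := waitIdx e s (qs e s) l with hi
  by_cases hlt : i < l.length + 1
  · -- found: qtest holds at i
    have hq : qtest e s (qs e s) l i = true := by
      have h2 : i < (List.range (l.length + 1)).length := by simpa using hlt
      have := List.findIdx_getElem (p := qtest e s (qs e s) l)
        (xs := List.range (l.length + 1)) (w := by rw [hi] at hlt; simpa [waitIdx] using hlt)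
      rw [hi]; simpa [waitIdx] using this
    rw [qtest, Bool.and_eq_true, decide_eq_true_iff, Option.isSome_iff_exists] at hq
    obtain ⟨hqlt, p, hp⟩ := hq
    right
    refine ⟨p, ?_, ?_, ?_, ?_⟩
    · unfold ms; rw [h1]; unfold step; dsimp only; rw [← hl, ← hi, if_pos hlt, hp]
    · have : qs e (s+1) = i := by
        unfold qs; rw [h1]; unfold step; dsimp only; rw [← hl, ← hi, if_pos hlt, hp]
      rw [this]; exact hqlt
    · have h3 : qs e (s+1) = i := by
        unfold qs; rw [h1]; unfold step; dsimp only; rw [← hl, ← hi, if_pos hlt, hp]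
      rw [h3, hσ]
      omega
    · have h3 : qs e (s+1) = i := by
        unfold qs; rw [h1]; unfold step; dsimp only; rw [← hl, ← hi, if_pos hlt, hp]
      rw [h3, hσ]
      exact hp
  · left
    constructor
    · unfold ms; rw [h1]; unfold step; dsimp only; rw [← hl, ← hi, if_neg hlt]
    · unfold qs; rw [h1]; unfold step; dsimp only; rw [← hl, ← hi, if_neg hlt]
      rfl

/-- If a suitable prefix converges, the wait step must launch a query. -/
theorem wait_launches {e s m : ℕ} (h : ms e s = none)
    (hm : qs e s < m) (hm2 : m ≤ (sigs e s ++ [pl e s]).length)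
    (hev : (evaln s (Denumerable.ofNat Code e) (inputOf (sigs e s ++ [pl e s]) m)).isSome) :
    (ms e (s + 1)).isSome := by
  rcases wait_cases h with ⟨h1, _⟩ | ⟨p, h1, _⟩
  · exfalso
    -- findIdx must have found something, so the step launches; contradiction with none
    set l : List ℕ := sigs e s ++ [pl e s] with hl
    have hfound : waitIdx e s (qs e s) l < l.length + 1 := by
      have : (List.range (l.length + 1)).findIdx (qtest e s (qs e s) l) <
          (List.range (l.length + 1)).length := by
        rw [List.findIdx_lt_length]
        exact ⟨m, by simp [List.mem_range]; omega, by
          rw [qtest, Bool.and_eq_true, decide_eq_true_iff]; exact ⟨hm, hev⟩⟩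
      simpa [waitIdx] using this
    -- then qtest holds at the found index and the step launches
    have hq : qtest e s (qs e s) l (waitIdx e s (qs e s) l) = true := by
      have := List.findIdx_getElem (p := qtest e s (qs e s) l)
        (xs := List.range (l.length + 1)) (w := by simpa [waitIdx] using hfound)
      simpa [waitIdx] using this
    rw [qtest, Bool.and_eq_true, Option.isSome_iff_exists] at hq
    obtain ⟨_, p, hp⟩ := hq
    have h2 : sim e (s+1) = step e s (sigs e s, qs e s, ms e s) := rfl
    rw [h] at h2
    have : ms e (s+1) = some (p, s) := by
      unfold ms; rw [h2]; unfold step; dsimp only; rw [← hl, if_pos hfound, hp]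
    rw [this] at h1; exact nomatch h1
  · rw [h1]; rfl

/-- Pending query, no convergence yet: everything frozen. -/
theorem run_persist {e s p t : ℕ} (h : ms e s = some (p, t))
    (he : evaln s (Denumerable.ofNat Code p) (qn e t) = none) :
    sim e (s + 1) = sim e s := by
  have h1 : sim e (s+1) = step e s (sigs e s, qs e s, ms e s) := rfl
  rw [h] at h1
  rw [h1]; unfold step; dsimp only; rw [he]
  dsimp only
  rw [← h]
  exact (sim_eta e s).symm

/-- Pending query converges: commit. -/
theorem run_conclude {e s p t v : ℕ} (h : ms e s = some (p, t))
    (he : evaln s (Denumerable.ofNat Code p) (qn e t) = some v) :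
    ms e (s + 1) = none ∧ qs e (s + 1) = qs e s ∧
    sigs e (s + 1) = if v = 0 then sigs e s ++ [qn e t] else sigs e s := by
  have h1 : sim e (s+1) = step e s (sigs e s, qs e s, ms e s) := rfl
  rw [h] at h1
  refine ⟨?_, ?_, ?_⟩
  · unfold ms; rw [h1]; unfold step; dsimp only; rw [he]
  · unfold qs; rw [h1]; unfold step; dsimp only; rw [he]
    by_cases hv : v = 0 <;> simp [hv, qs]
  · unfold sigs; rw [h1]; unfold step; dsimp only; rw [he]
    by_cases hv : v = 0 <;> simp [hv, sigs]


/-! ### Global dynamics -/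

theorem pending_step_back {e s p t : ℕ} (h : ms e (s + 1) = some (p, t)) :
    ms e s = some (p, t) ∨ (t = s ∧ ms e s = none) := by
  cases hms : ms e s with
  | none =>
    rcases wait_cases hms with ⟨h1, _⟩ | ⟨p', h1, _⟩
    · rw [h1] at h; exact absurd h (by simp)
    · rw [h1] at h
      have h2 := Option.some.inj h
      exact Or.inr ⟨(congrArg Prod.snd h2).symm, rfl⟩
  | some pt =>
    obtain ⟨p', t'⟩ := pt
    cases hev : evaln s (Denumerable.ofNat Code p') (qn e t') with
    | none =>
      have h1 := run_persist hms hev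
      left
      have h2 : ms e (s + 1) = some (p', t') := by unfold ms; rw [h1]; exact hms
      exact h2.symm.trans h
    | some v =>
      have := (run_conclude hms hev).1
      rw [this] at h; exact absurd h (by simp)

theorem ms_lt {e : ℕ} : ∀ {s p t : ℕ}, ms e s = some (p, t) → t < s := by
  intro s
  induction s with
  | zero => intro p t h; rw [ms_zero] at h; exact absurd h (by simp)
  | succ s ih =>
    intro p t h
    rcases pending_step_back h with h1 | ⟨rfl, _⟩
    · exact Nat.lt_succ_of_lt (ih h1)
    · exact Nat.lt_succ_self _

theorem pending_back {e : ℕ} : ∀ {s p t : ℕ}, ms e s = some (p, t) →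
    ∀ u, t < u → u ≤ s → ms e u = some (p, t) := by
  intro s
  induction s with
  | zero => intro p t h u h1 h2; exfalso; omega
  | succ s ih =>
    intro p t h u h1 h2
    rcases Nat.lt_succ_iff_lt_or_eq.1 (Nat.lt_succ_of_le h2) with h3 | rfl
    · rcases pending_step_back h with h4 | ⟨rfl, _⟩
      · exact ih h4 u h1 (by omega)
      · omega
    · exact h

def Launch (e t p : ℕ) : Prop := ms e t = none ∧ ms e (t + 1) = some (p, t)

theorem launch_unique {e t p p' : ℕ} (h : Launch e t p) (h' : Launch e t p') : p = p' := by
  have := h.2.symm.trans h'.2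
  exact (Prod.mk.injEq _ _ _ _ ▸ Option.some.inj this).1

theorem launch_of_pending {e s p t : ℕ} (h : ms e s = some (p, t)) : Launch e t p := by
  have hts := ms_lt h
  have h1 : ms e (t + 1) = some (p, t) := pending_back h (t + 1) (Nat.lt_succ_self t) hts
  refine ⟨?_, h1⟩
  cases hmt : ms e t with
  | none => rfl
  | some pt =>
    obtain ⟨p', t'⟩ := pt
    exfalso
    have ht' := ms_lt hmt
    cases hev : evaln t (Denumerable.ofNat Code p') (qn e t') with
    | none =>
      have h2 := run_persist hmt hev
      have h3 : ms e (t+1) = ms e t := by unfold ms; rw [h2]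
      rw [h1, hmt] at h3
      have : t = t' := by
        have := Option.some.inj h3; exact congrArg Prod.snd this
      omega
    | some v =>
      have := (run_conclude hmt hev).1
      rw [h1] at this; exact absurd this (by simp)

theorem launch_data {e t p : ℕ} (h : Launch e t p) :
    qs e t < qs e (t + 1) ∧ qs e (t + 1) ≤ (sigs e (t + 1)).length ∧
    evaln t (Denumerable.ofNat Code e) (inputOf (sigs e (t + 1)) (qs e (t + 1))) = some p := by
  rcases wait_cases h.1 with ⟨h1, _⟩ | ⟨p', h1, h2, h3, h4⟩
  · rw [h.2] at h1; exact absurd h1 (by simp)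
  · have : p' = p := by
      have := h1.symm.trans h.2
      exact (Prod.mk.injEq _ _ _ _ ▸ Option.some.inj this).1
    subst this
    exact ⟨h2, h3, h4⟩

theorem sigs_succ_cases (e s : ℕ) :
    sigs e (s + 1) = sigs e s ∨ (ms e s = none ∧ sigs e (s + 1) = sigs e s ++ [pl e s]) ∨
    ∃ p t, ms e s = some (p, t) ∧ evaln s (Denumerable.ofNat Code p) (qn e t) = some 0 ∧
      sigs e (s + 1) = sigs e s ++ [qn e t] := by
  cases hms : ms e s with
  | none => exact Or.inr (Or.inl ⟨rfl, wait_sigma hms⟩)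
  | some pt =>
    obtain ⟨p, t⟩ := pt
    cases hev : evaln s (Denumerable.ofNat Code p) (qn e t) with
    | none => exact Or.inl (by unfold sigs; rw [run_persist hms hev])
    | some v =>
      have h3 := (run_conclude hms hev).2.2
      by_cases hv : v = 0
      · subst hv; exact Or.inr (Or.inr ⟨p, t, rfl, hev, by simpa using h3⟩)
      · exact Or.inl (by rw [h3, if_neg hv])

theorem sigs_prefix_succ (e s : ℕ) : sigs e s <+: sigs e (s + 1) := by
  rcases sigs_succ_cases e s with h | ⟨_, h⟩ | ⟨p, t, _, _, h⟩
  · rw [h]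
  · rw [h]
    exact List.prefix_append _ _
  · rw [h]
    exact List.prefix_append _ _

theorem sigs_prefix {e : ℕ} {s u : ℕ} (h : s ≤ u) : sigs e s <+: sigs e u := by
  induction u with
  | zero => rw [Nat.le_zero.1 h]
  | succ u ih =>
    rcases Nat.lt_succ_iff_lt_or_eq.1 (Nat.lt_succ_of_le h) with h1 | rfl
    · exact (ih (by omega)).trans (sigs_prefix_succ e u)
    · exact List.prefix_rfl

theorem qs_mono_succ (e s : ℕ) : qs e s ≤ qs e (s + 1) := by
  cases hms : ms e s with
  | none =>
    rcases wait_cases hms with ⟨_, h1⟩ | ⟨p, _, h2, _, _⟩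
    · omega
    · omega
  | some pt =>
    obtain ⟨p, t⟩ := pt
    cases hev : evaln s (Denumerable.ofNat Code p) (qn e t) with
    | none => have := run_persist hms hev; unfold qs; rw [this]
    | some v => rw [(run_conclude hms hev).2.1]

theorem qs_mono {e : ℕ} {s u : ℕ} (h : s ≤ u) : qs e s ≤ qs e u := by
  induction u with
  | zero => rw [Nat.le_zero.1 h]
  | succ u ih =>
    rcases Nat.lt_succ_iff_lt_or_eq.1 (Nat.lt_succ_of_le h) with h1 | rfl
    · exact (ih (by omega)).trans (qs_mono_succ e u)
    · exact le_rfl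

theorem conclude_of_halts {e p t : ℕ} {k v : ℕ}
    (hk : evaln k (Denumerable.ofNat Code p) (qn e t) = some v) :
    ∀ {s}, ms e s = some (p, t) →
    ∃ u, s ≤ u ∧ ms e u = some (p, t) ∧ evaln u (Denumerable.ofNat Code p) (qn e t) = some v := by
  suffices H : ∀ d s, k ≤ s + d → ms e s = some (p, t) →
      ∃ u, s ≤ u ∧ ms e u = some (p, t) ∧ evaln u (Denumerable.ofNat Code p) (qn e t) = some v by
    intro s hs; exact H k s (by omega) hs
  intro d
  induction d with
  | zero =>
    intro s hks hs
    refine ⟨s, le_rfl, hs, ?_⟩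
    have h2 : v ∈ evaln k (Denumerable.ofNat Code p) (qn e t) := Option.mem_def.2 hk
    exact Option.mem_def.1 (evaln_mono (show k ≤ s by omega) h2)
  | succ d ih =>
    intro s hks hs
    cases hev : evaln s (Denumerable.ofNat Code p) (qn e t) with
    | none =>
      have h1 := run_persist hs hev
      have h2 : ms e (s+1) = some (p, t) := by unfold ms; rw [h1]; exact hs
      obtain ⟨u, hu1, hu2, hu3⟩ := ih (s+1) (by omega) h2
      exact ⟨u, by omega, hu2, hu3⟩
    | some v' =>
      have : v' = v := by
        by_cases hsk : s ≤ k
        · have h3 := evaln_mono hsk (Option.mem_def.2 hev)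
          exact Option.some.inj ((Option.mem_def.1 h3).symm.trans hk)
        · have h3 := evaln_mono (show k ≤ s by omega) (Option.mem_def.2 hk)
          exact (Option.some.inj ((Option.mem_def.1 h3).symm.trans hev)).symm
      subst this
      exact ⟨s, le_rfl, hs, hev⟩

theorem pending_frozen {e : ℕ} {s p t : ℕ} (h : ms e s = some (p, t)) :
    sigs e s = sigs e (t + 1) := by
  have hts := ms_lt h
  suffices H : ∀ u, t + 1 ≤ u → u ≤ s → sigs e u = sigs e (t + 1) from H s hts le_rfl
  intro u
  induction u with
  | zero => intro h1 h2; exfalso; omega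
  | succ u ih =>
    intro h1 h2
    rcases eq_or_lt_of_le h1 with h3 | h3
    · rw [← h3]
    · have h1' : t + 1 ≤ u := by omega
      have hu : ms e u = some (p, t) := pending_back h u (by omega) (by omega)
      have hu1 : ms e (u + 1) = some (p, t) := pending_back h (u + 1) (by omega) h2
      cases hev : evaln u (Denumerable.ofNat Code p) (qn e t) with
      | none =>
        have h5 := run_persist hu hev
        have h4 : sigs e (u+1) = sigs e u := by unfold sigs; rw [h5]
        rw [h4]; exact ih h1' (by omega)
      | some v =>
        have h6 := (run_conclude hu hev).1
        rw [hu1] at h6; exact absurd h6 (by simp)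

theorem stall_frozen {e t p : ℕ} (hL : Launch e t p)
    (hdiv : ∀ k, evaln k (Denumerable.ofNat Code p) (qn e t) = none) :
    ∀ u, t < u → sim e u = sim e (t + 1) := by
  intro u
  induction u with
  | zero => intro hu; exfalso; omega
  | succ u ih =>
    intro hu
    rcases Nat.lt_succ_iff_lt_or_eq.1 hu with h1 | h1
    · have h2 := ih h1
      have h3 : ms e u = some (p, t) := by
        unfold ms; rw [h2]; exact hL.2
      have h4 : sim e (u+1) = sim e u := run_persist h3 (hdiv u)
      rw [h4, h2]
    · rw [← h1]

/-! ### Emission characterizations -/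

def emitted (e : ℕ) : Set ℕ := {x | ∃ s, x ∈ sigs e s}

theorem mem_emitted_of_mem_sigs {e s x : ℕ} (h : x ∈ sigs e s) : x ∈ emitted e := ⟨s, h⟩


/-! ### Emission characterizations -/

theorem mem_provenance {e : ℕ} : ∀ {s x : ℕ}, x ∈ sigs e s →
    (∃ u, ms e u = none ∧ x = pl e u) ∨
    (∃ u p t, ms e u = some (p, t) ∧ evaln u (Denumerable.ofNat Code p) (qn e t) = some 0 ∧
      x = qn e t) := by
  intro s
  induction s with
  | zero => intro x hx; simp [sigs, sim] at hx
  | succ s ih =>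
    intro x hx
    rcases sigs_succ_cases e s with h | ⟨hms, h⟩ | ⟨p, t, hms, hev, h⟩ <;> rw [h] at hx
    · exact ih hx
    · rcases List.mem_append.1 hx with h1 | h1
      · exact ih h1
      · exact Or.inl ⟨s, hms, by simpa using h1⟩
    · rcases List.mem_append.1 hx with h1 | h1
      · exact ih h1
      · exact Or.inr ⟨s, p, t, hms, hev, by simpa using h1⟩

theorem pl_mem_emitted {e r : ℕ} : pl e r ∈ emitted e ↔ ms e r = none := by
  constructor
  · rintro ⟨s, hs⟩
    rcases mem_provenance hs with ⟨u, hu, hx⟩ | ⟨u, p, t, _, _, hx⟩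
    · have : r = u := by simpa [pl, Nat.pair_eq_pair] using hx
      rw [this]; exact hu
    · exfalso; simp [pl, qn, Nat.pair_eq_pair] at hx
  · intro h
    exact ⟨r + 1, by rw [wait_sigma h]; simp⟩

theorem qn_mem_emitted {e r : ℕ} :
    qn e r ∈ emitted e ↔
      ∃ p, Launch e r p ∧ eval (Denumerable.ofNat Code p) (qn e r) = Part.some 0 := by
  constructor
  · rintro ⟨s, hs⟩
    rcases mem_provenance hs with ⟨u, hu, hx⟩ | ⟨u, p, t, hms, hev, hx⟩
    · exfalso; simp [pl, qn, Nat.pair_eq_pair] at hx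
    · have : r = t := by simpa [qn, Nat.pair_eq_pair] using hx
      subst this
      refine ⟨p, launch_of_pending hms, ?_⟩
      exact Part.eq_some_iff.2 (evaln_sound (Option.mem_def.2 hev))
  · rintro ⟨p, hL, hev⟩
    have h0 : 0 ∈ eval (Denumerable.ofNat Code p) (qn e r) := by
      rw [hev]; exact Part.mem_some 0
    obtain ⟨k, hk⟩ := evaln_complete.1 h0
    obtain ⟨u, _, hu, hu2⟩ := conclude_of_halts (Option.mem_def.1 hk) hL.2
    have h3 := (run_conclude hu hu2).2.2
    refine ⟨u + 1, ?_⟩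
    rw [h3]
    simp

theorem tw_not_emitted {e s j : ℕ} : tw e s j ∉ emitted e := by
  rintro ⟨u, hu⟩
  rcases mem_provenance hu with ⟨r, _, hx⟩ | ⟨r, p, t, _, _, hx⟩ <;>
    simp [tw, pl, qn, Nat.pair_eq_pair] at hx

theorem emitted_shape {e x : ℕ} (h : x ∈ emitted e) :
    (∃ r, x = pl e r) ∨ (∃ r, x = qn e r) := by
  obtain ⟨s, hs⟩ := h
  rcases mem_provenance hs with ⟨u, _, hx⟩ | ⟨u, p, t, _, _, hx⟩
  · exact Or.inl ⟨u, hx⟩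
  · exact Or.inr ⟨t, hx⟩

/-! ### The limit text of the construction -/

noncomputable def pick (e n : ℕ) : ℕ :=
  letI := Classical.dec (∃ s, n < (sigs e s).length)
  if h : ∃ s, n < (sigs e s).length then h.choose else 0

noncomputable def TT (e : ℕ) : Text := fun n => (sigs e (pick e n))[n]?

theorem getElem?_coherent {e : ℕ} {s u n : ℕ} (h : s ≤ u) (hn : n < (sigs e s).length) :
    (sigs e u)[n]? = (sigs e s)[n]? := by
  obtain ⟨t, ht⟩ := sigs_prefix (e := e) h
  rw [← ht, List.getElem?_append, if_pos hn]

theorem TT_eq_some_iff {e n x : ℕ} :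
    TT e n = some x ↔ ∃ s, (sigs e s)[n]? = some x := by
  constructor
  · intro h; exact ⟨pick e n, h⟩
  · rintro ⟨s, hs⟩
    have hn : n < (sigs e s).length := by
      by_contra h2
      rw [List.getElem?_eq_none (by omega)] at hs
      exact nomatch hs
    have hex : ∃ s, n < (sigs e s).length := ⟨s, hn⟩
    unfold TT pick
    split
    next h5 =>
      have h3 := h5.choose_spec
      rcases le_total s h5.choose with h4 | h4
      · rw [getElem?_coherent h4 hn]; exact hs
      · rw [← getElem?_coherent h4 h3, hs]
    next h5 => exact absurd hex h5

theorem content_TT (e : ℕ) : content (TT e) = emitted e := by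
  ext x
  constructor
  · rintro ⟨n, hn⟩
    obtain ⟨s, hs⟩ := TT_eq_some_iff.1 hn
    obtain ⟨hlt, hval⟩ := List.getElem?_eq_some_iff.1 hs
    exact ⟨s, hval ▸ List.getElem_mem hlt⟩
  · rintro ⟨s, hs⟩
    obtain ⟨i, hi, hix⟩ := List.mem_iff_getElem.1 hs
    refine ⟨i, TT_eq_some_iff.2 ⟨s, ?_⟩⟩
    rw [List.getElem?_eq_getElem hi, hix]

theorem initSeg_TT {e s m : ℕ} (h : m ≤ (sigs e s).length) :
    initSeg (TT e) m = ((sigs e s).take m).map Option.some := by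
  apply List.ext_getElem?
  intro n
  by_cases hn : n < m
  · have hn2 : n < (sigs e s).length := by omega
    rw [initSeg]
    rw [List.getElem?_map, List.getElem?_map, List.getElem?_range hn,
      List.getElem?_take_of_lt hn, List.getElem?_eq_getElem hn2]
    simp only [Option.map_some]
    congr 1
    exact TT_eq_some_iff.2 ⟨s, List.getElem?_eq_getElem hn2⟩
  · rw [initSeg]
    rw [List.getElem?_map, List.getElem?_map]
    rw [List.getElem?_eq_none (by simpa using hn), List.getElem?_eq_none (by simp; omega)]
    rfl

theorem inputOf_initSeg {e s m : ℕ} (h : m ≤ (sigs e s).length) :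
    inputOf (sigs e s) m = Encodable.encode (initSeg (TT e) m) := by
  rw [initSeg_TT h, inputOf_eq_take h]


/-! ### Computability of the construction -/

theorem pl_primrec : Primrec₂ pl :=
  Primrec₂.natPair.comp Primrec.fst (Primrec₂.natPair.comp (Primrec.const 0) Primrec.snd)

theorem qn_primrec : Primrec₂ qn :=
  Primrec₂.natPair.comp Primrec.fst (Primrec₂.natPair.comp (Primrec.const 1) Primrec.snd)

theorem inputOf_primrec : Primrec₂ inputOf := by
  have h1 : Primrec₂ fun (q : List ℕ × ℕ) (i : ℕ) => Option.some (q.1.getD i 0) :=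
    Primrec.option_some.comp
      ((Primrec.list_getD 0).comp (Primrec.fst.comp Primrec.fst) Primrec.snd)
  exact Primrec.encode.comp
    (Primrec.list_map (Primrec.list_range.comp Primrec.snd) h1)

set_option maxHeartbeats 2000000 in
theorem step_primrec : Primrec₂ fun (e : ℕ) (p : ℕ × St) => step e p.1 p.2 := by
  have he : Primrec fun q : ℕ × ℕ × St => q.1 := Primrec.fst
  have hs : Primrec fun q : ℕ × ℕ × St => q.2.1 := Primrec.fst.comp Primrec.snd
  have hsg : Primrec fun q : ℕ × ℕ × St => q.2.2.1 :=
    Primrec.fst.comp (Primrec.snd.comp Primrec.snd)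
  have hq : Primrec fun q : ℕ × ℕ × St => q.2.2.2.1 :=
    Primrec.fst.comp (Primrec.snd.comp (Primrec.snd.comp Primrec.snd))
  have hmode : Primrec fun q : ℕ × ℕ × St => q.2.2.2.2 :=
    Primrec.snd.comp (Primrec.snd.comp (Primrec.snd.comp Primrec.snd))
  have hcode : Primrec fun q : ℕ × ℕ × St => Denumerable.ofNat Code q.1 :=
    (Primrec.ofNat Code).comp he
  have hl : Primrec fun q : ℕ × ℕ × St => q.2.2.1 ++ [pl q.1 q.2.1] :=
    Primrec.list_append.comp hsg
      (Primrec.list_cons.comp (pl_primrec.comp he hs) (Primrec.const []))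
  have hqt : Primrec₂ fun (q : ℕ × ℕ × St) (m : ℕ) =>
      qtest q.1 q.2.1 q.2.2.2.1 (q.2.2.1 ++ [pl q.1 q.2.1]) m := by
    have harg : Primrec fun x : (ℕ × ℕ × St) × ℕ =>
        ((x.1.2.1, Denumerable.ofNat Code x.1.1),
          inputOf (x.1.2.2.1 ++ [pl x.1.1 x.1.2.1]) x.2) :=
      ((hs.comp Primrec.fst).pair (hcode.comp Primrec.fst)).pair
        (inputOf_primrec.comp (hl.comp Primrec.fst) Primrec.snd)
    exact Primrec.and.comp
      (Primrec.nat_lt.comp (hq.comp Primrec.fst) Primrec.snd).decide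
      (Primrec.option_isSome.comp (primrec_evaln.comp harg))
  have hwidx : Primrec fun q : ℕ × ℕ × St =>
      waitIdx q.1 q.2.1 q.2.2.2.1 (q.2.2.1 ++ [pl q.1 q.2.1]) := by
    unfold waitIdx
    exact Primrec.list_findIdx
      (Primrec.list_range.comp (Primrec.succ.comp (Primrec.list_length.comp hl))) hqt
  have hwev : Primrec fun q : ℕ × ℕ × St =>
      (if waitIdx q.1 q.2.1 q.2.2.2.1 (q.2.2.1 ++ [pl q.1 q.2.1]) <
          (q.2.2.1 ++ [pl q.1 q.2.1]).length + 1 then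
        evaln q.2.1 (Denumerable.ofNat Code q.1)
          (inputOf (q.2.2.1 ++ [pl q.1 q.2.1])
            (waitIdx q.1 q.2.1 q.2.2.2.1 (q.2.2.1 ++ [pl q.1 q.2.1])))
      else none) :=
    Primrec.ite
      (Primrec.nat_lt.comp hwidx (Primrec.succ.comp (Primrec.list_length.comp hl)))
      (primrec_evaln.comp ((hs.pair hcode).pair (inputOf_primrec.comp hl hwidx)))
      (Primrec.const none)
  have hwaitSt : Primrec fun q : ℕ × ℕ × St =>
      (Option.casesOn (motive := fun _ => St)
        (if waitIdx q.1 q.2.1 q.2.2.2.1 (q.2.2.1 ++ [pl q.1 q.2.1]) <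
            (q.2.2.1 ++ [pl q.1 q.2.1]).length + 1 then
          evaln q.2.1 (Denumerable.ofNat Code q.1)
            (inputOf (q.2.2.1 ++ [pl q.1 q.2.1])
              (waitIdx q.1 q.2.1 q.2.2.2.1 (q.2.2.1 ++ [pl q.1 q.2.1])))
        else none)
        (q.2.2.1 ++ [pl q.1 q.2.1], q.2.2.2.1, none)
        (fun p => (q.2.2.1 ++ [pl q.1 q.2.1],
          waitIdx q.1 q.2.1 q.2.2.2.1 (q.2.2.1 ++ [pl q.1 q.2.1]), some (p, q.2.1)))) := by
    apply Primrec.option_casesOn hwev (hl.pair (hq.pair (Primrec.const none)))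
    exact (hl.comp Primrec.fst).pair ((hwidx.comp Primrec.fst).pair
      (Primrec.option_some.comp (Primrec.snd.pair (hs.comp Primrec.fst))))
  have hrev : Primrec₂ fun (q : ℕ × ℕ × St) (pt : ℕ × ℕ) =>
      evaln q.2.1 (Denumerable.ofNat Code pt.1) (qn q.1 pt.2) :=
    primrec_evaln.comp
      (((hs.comp Primrec.fst).pair
        ((Primrec.ofNat Code).comp (Primrec.fst.comp Primrec.snd))).pair
        (qn_primrec.comp (he.comp Primrec.fst) (Primrec.snd.comp Primrec.snd)))
  have hrunSt : Primrec₂ fun (q : ℕ × ℕ × St) (pt : ℕ × ℕ) =>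
      (Option.casesOn (motive := fun _ => St)
        (evaln q.2.1 (Denumerable.ofNat Code pt.1) (qn q.1 pt.2))
        (q.2.2.1, q.2.2.2.1, q.2.2.2.2)
        (fun v => (if v = 0 then q.2.2.1 ++ [qn q.1 pt.2] else q.2.2.1,
          q.2.2.2.1, none))) := by
    apply Primrec.option_casesOn hrev
      (((hsg.comp Primrec.fst).pair ((hq.comp Primrec.fst).pair
        (hmode.comp Primrec.fst))))
    have hx : Primrec fun x : ((ℕ × ℕ × St) × ℕ × ℕ) × ℕ =>
        x.1.1.2.2.1 ++ [qn x.1.1.1 x.1.2.2] :=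
      Primrec.list_append.comp (hsg.comp (Primrec.fst.comp Primrec.fst))
        (Primrec.list_cons.comp
          (qn_primrec.comp (he.comp (Primrec.fst.comp Primrec.fst))
            (Primrec.snd.comp (Primrec.snd.comp Primrec.fst)))
          (Primrec.const []))
    exact (Primrec.ite (Primrec.eq.comp Primrec.snd (Primrec.const 0)) hx
        (hsg.comp (Primrec.fst.comp Primrec.fst))).pair
      ((hq.comp (Primrec.fst.comp Primrec.fst)).pair (Primrec.const none))
  exact (Primrec.option_casesOn hmode hwaitSt hrunSt).of_eq fun q => by
    rcases q with ⟨e, s, σ, qq, _ | pt⟩ <;> rfl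

theorem sim_primrec : Primrec₂ sim := by
  have h := Primrec.nat_rec (f := fun _ : ℕ => (([], 0, none) : St))
    (g := fun (e : ℕ) (p : ℕ × St) => step e p.1 p.2) (Primrec.const _) step_primrec
  exact h.of_eq fun e s => by
    induction s with
    | zero => rfl
    | succ s ih =>
      simp only [sim_succ]
      exact congrArg (step e s) ih

theorem sigs_primrec : Primrec₂ sigs := Primrec.fst.comp sim_primrec

theorem qs_primrec : Primrec₂ qs := Primrec.fst.comp (Primrec.snd.comp sim_primrec)

theorem ms_primrec : Primrec₂ ms := Primrec.snd.comp (Primrec.snd.comp sim_primrec)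


/-! ### The universal decision function and the hypothesis indices -/

def memb (x : ℕ) (l : List ℕ) : Bool := l.foldr (fun a b => decide (a = x) || b) false

theorem memb_iff {x : ℕ} {l : List ℕ} : memb x l = true ↔ x ∈ l := by
  induction l with
  | nil => simp [memb]
  | cons a l ih =>
    simp only [memb, List.foldr_cons, Bool.or_eq_true, decide_eq_true_iff] at ih ⊢
    rw [List.mem_cons, ih]
    constructor
    · rintro (h | h)
      · exact Or.inl h.symm
      · exact Or.inr h
    · rintro (h | h)
      · exact Or.inl h.symm
      · exact Or.inr h

/-- Membership test for the branch languages. -/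
def btest (e s x : ℕ) : Bool :=
  memb x (sigs e (s + 1)) ||
    (decide (x.unpair.1 = e) && decide (x.unpair.2.unpair.1 = 2) &&
      decide (x.unpair.2.unpair.2.unpair.1 = s))

/-- Detects whether `x` is a launched query name of column `e`, returning the
queried hypothesis. -/
def qdetect (e x : ℕ) : Option ℕ :=
  if x.unpair.1 = e ∧ x.unpair.2.unpair.1 = 1 then
    Option.casesOn (ms e (x.unpair.2.unpair.2 + 1)) none
      (fun pt => if pt.2 = x.unpair.2.unpair.2 then some pt.1 else none)
  else none

/-- The value of the main-language decision in the immediate cases. -/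
def cval (e x : ℕ) : ℕ :=
  if x.unpair.1 = e ∧ x.unpair.2.unpair.1 = 0 ∧ ms e (x.unpair.2.unpair.2) = none then 1 else 0

def Fu' (n k : ℕ) : Option ℕ :=
  if n.unpair.1.unpair.1 = 0 then
    Option.casesOn (qdetect n.unpair.1.unpair.2 n.unpair.2)
      (some (cval n.unpair.1.unpair.2 n.unpair.2))
      (fun p => (evaln k (Denumerable.ofNat Code p) n.unpair.2).map
        (fun v => if v = 0 then 1 else 0))
  else
    some (if btest n.unpair.1.unpair.2.unpair.1 n.unpair.1.unpair.2.unpair.2 n.unpair.2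
      then 1 else 0)

def Fu : ℕ →. ℕ := fun n => Nat.rfindOpt (Fu' n)

theorem Fu'_mono {n : ℕ} {a k k' : ℕ} (h : k ≤ k') (ha : a ∈ Fu' n k) : a ∈ Fu' n k' := by
  unfold Fu' at ha ⊢
  by_cases h0 : n.unpair.1.unpair.1 = 0
  · rw [if_pos h0] at ha ⊢
    cases hq : qdetect n.unpair.1.unpair.2 n.unpair.2 with
    | none => simp only [hq] at ha ⊢; exact ha
    | some p =>
      simp only [hq] at ha ⊢
      simp only [Option.mem_def, Option.map_eq_some_iff] at ha ⊢
      obtain ⟨v, hv, rfl⟩ := ha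
      exact ⟨v, Option.mem_def.1 (evaln_mono h (Option.mem_def.2 hv)), rfl⟩
  · rw [if_neg h0] at ha ⊢; exact ha

theorem Fu_mem_iff {n a : ℕ} : a ∈ Fu n ↔ ∃ k, a ∈ Fu' n k :=
  Nat.rfindOpt_mono fun {_ _ _} h => Fu'_mono h


theorem memb_primrec : Primrec₂ memb := by
  have h : Primrec₂ fun (q : ℕ × List ℕ) (p : ℕ × Bool) => (decide (p.1 = q.1) || p.2) :=
    Primrec.or.comp
      (Primrec.eq.comp (Primrec.fst.comp Primrec.snd) (Primrec.fst.comp Primrec.fst)).decide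
      (Primrec.snd.comp Primrec.snd)
  exact Primrec.list_foldr Primrec.snd (Primrec.const false) h

theorem btest_primrec : Primrec₂ fun (p : ℕ × ℕ) (x : ℕ) => btest p.1 p.2 x := by
  have he : Primrec fun q : (ℕ × ℕ) × ℕ => q.1.1 := Primrec.fst.comp Primrec.fst
  have hs : Primrec fun q : (ℕ × ℕ) × ℕ => q.1.2 := Primrec.snd.comp Primrec.fst
  have hx : Primrec fun q : (ℕ × ℕ) × ℕ => q.2 := Primrec.snd
  have hxu := Primrec.unpair.comp hx
  have hx1 := Primrec.fst.comp hxu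
  have hx2u := Primrec.unpair.comp (Primrec.snd.comp hxu)
  have hx21 := Primrec.fst.comp hx2u
  have hx22u := Primrec.unpair.comp (Primrec.snd.comp hx2u)
  have hx221 := Primrec.fst.comp hx22u
  exact Primrec.or.comp
    (memb_primrec.comp hx (sigs_primrec.comp he (Primrec.succ.comp hs)))
    (Primrec.and.comp
      (Primrec.and.comp (Primrec.eq.comp hx1 he).decide (Primrec.eq.comp hx21 (Primrec.const 2)).decide)
      (Primrec.eq.comp hx221 hs).decide)

theorem qdetect_primrec : Primrec₂ qdetect := by
  have he : Primrec fun q : ℕ × ℕ => q.1 := Primrec.fst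
  have hx : Primrec fun q : ℕ × ℕ => q.2 := Primrec.snd
  have hxu := Primrec.unpair.comp hx
  have hx1 := Primrec.fst.comp hxu
  have hx2u := Primrec.unpair.comp (Primrec.snd.comp hxu)
  have hx21 := Primrec.fst.comp hx2u
  have hx22 := Primrec.snd.comp hx2u
  have hg : Primrec₂ fun (q : ℕ × ℕ) (pt : ℕ × ℕ) =>
      (if pt.2 = q.2.unpair.2.unpair.2 then some pt.1 else none) :=
    Primrec.ite
      (Primrec.eq.comp (Primrec.snd.comp Primrec.snd) (hx22.comp Primrec.fst))
      (Primrec.option_some.comp (Primrec.fst.comp Primrec.snd))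
      (Primrec.const none)
  exact Primrec.ite
    (PrimrecPred.and (Primrec.eq.comp hx1 he) (Primrec.eq.comp hx21 (Primrec.const 1)))
    (Primrec.option_casesOn (ms_primrec.comp he (Primrec.succ.comp hx22))
      (Primrec.const none) hg)
    (Primrec.const none)

theorem cval_primrec : Primrec₂ cval := by
  have he : Primrec fun q : ℕ × ℕ => q.1 := Primrec.fst
  have hx : Primrec fun q : ℕ × ℕ => q.2 := Primrec.snd
  have hxu := Primrec.unpair.comp hx
  have hx1 := Primrec.fst.comp hxu
  have hx2u := Primrec.unpair.comp (Primrec.snd.comp hxu)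
  have hx21 := Primrec.fst.comp hx2u
  have hx22 := Primrec.snd.comp hx2u
  exact Primrec.ite
    (PrimrecPred.and (Primrec.eq.comp hx1 he)
      (PrimrecPred.and (Primrec.eq.comp hx21 (Primrec.const 0))
        (Primrec.eq.comp (ms_primrec.comp he hx22)
          (Primrec.const (none : Option (ℕ × ℕ))))))
    (Primrec.const 1) (Primrec.const 0)

theorem Fu'_primrec : Primrec₂ Fu' := by
  have hn : Primrec fun q : ℕ × ℕ => q.1 := Primrec.fst
  have hk : Primrec fun q : ℕ × ℕ => q.2 := Primrec.snd
  have hnu := Primrec.unpair.comp hn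
  have hz := Primrec.fst.comp hnu
  have hx := Primrec.snd.comp hnu
  have hzu := Primrec.unpair.comp hz
  have hz11 := Primrec.fst.comp hzu
  have hz12 := Primrec.snd.comp hzu
  have hmap : Primrec₂ fun (q : ℕ × ℕ) (p : ℕ) =>
      (evaln q.2 (Denumerable.ofNat Code p) q.1.unpair.2).map
        (fun v => if v = 0 then 1 else 0) :=
    Primrec.option_map
      (primrec_evaln.comp
        (((hk.comp Primrec.fst).pair ((Primrec.ofNat Code).comp Primrec.snd)).pair
          (hx.comp Primrec.fst)))
      (Primrec.ite (Primrec.eq.comp Primrec.snd (Primrec.const 0))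
        (Primrec.const 1) (Primrec.const 0) :
          Primrec₂ fun (_ : (ℕ × ℕ) × ℕ) (v : ℕ) => if v = 0 then 1 else 0)
  have hbt : Primrec fun q : ℕ × ℕ =>
      btest q.1.unpair.1.unpair.2.unpair.1 q.1.unpair.1.unpair.2.unpair.2 q.1.unpair.2 := by
    have hz12u := Primrec.unpair.comp hz12
    exact btest_primrec.comp
      ((Primrec.fst.comp hz12u).pair (Primrec.snd.comp hz12u)) hx
  exact Primrec.ite (Primrec.eq.comp hz11 (Primrec.const 0))
    (Primrec.option_casesOn (qdetect_primrec.comp hz12 hx)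
      (Primrec.option_some.comp (cval_primrec.comp hz12 hx)) hmap)
    (Primrec.option_some.comp
      (Primrec.ite (Primrec.eq.comp hbt (Primrec.const true))
        (Primrec.const 1) (Primrec.const 0)))

theorem Fu_partrec : Nat.Partrec Fu := by
  have h1 : Computable₂ Fu' := Fu'_primrec.to_comp
  have h2 : Partrec Fu := Partrec.rfindOpt h1
  exact Partrec.nat_iff.1 h2

noncomputable def uM : Code := (Nat.Partrec.Code.exists_code.1 Fu_partrec).choose

theorem uM_eval : eval uM = Fu := (Nat.Partrec.Code.exists_code.1 Fu_partrec).choose_spec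

noncomputable def cIdx (e : ℕ) : ℕ := Encodable.encode (uM.curry (Nat.pair 0 e))

noncomputable def bIdx (e s : ℕ) : ℕ :=
  Encodable.encode (uM.curry (Nat.pair 1 (Nat.pair e s)))

theorem phi_encode (c : Code) (x : ℕ) : phi (Encodable.encode c) x = eval c x := by
  unfold phi; rw [Denumerable.ofNat_encode]

theorem phi_cIdx (e x : ℕ) : phi (cIdx e) x = Fu (Nat.pair (Nat.pair 0 e) x) := by
  rw [cIdx, phi_encode, eval_curry, uM_eval]

theorem phi_bIdx (e s x : ℕ) :
    phi (bIdx e s) x = Fu (Nat.pair (Nat.pair 1 (Nat.pair e s)) x) := by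
  rw [bIdx, phi_encode, eval_curry, uM_eval]

/-! ### Semantics of the b-indices -/

theorem Fu_b (e s x : ℕ) :
    Fu (Nat.pair (Nat.pair 1 (Nat.pair e s)) x) =
      Part.some (if btest e s x then 1 else 0) := by
  refine Part.eq_some_iff.2 (Fu_mem_iff.2 ⟨0, ?_⟩)
  simp [Fu', Nat.unpair_pair]

theorem cindex_bIdx (e s : ℕ) : CIndex (bIdx e s) := by
  intro x
  rw [phi_bIdx, Fu_b]
  by_cases h : btest e s x
  · right; rw [if_pos h]
  · left; rw [if_neg h]

theorem mem_cset_bIdx {e s x : ℕ} : x ∈ Cset (bIdx e s) ↔ btest e s x = true := by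
  unfold Cset
  rw [Set.mem_setOf_eq, phi_bIdx, Fu_b]
  constructor
  · intro h
    by_cases hb : btest e s x
    · exact hb
    · rw [if_neg hb] at h
      have h2 : (0 : ℕ) = 1 := Part.some_inj.1 h
      exact absurd h2 (by omega)
  · intro h; rw [if_pos h]

/-! ### Semantics of the c-indices -/

theorem unpair3 (x : ℕ) :
    Nat.pair x.unpair.1 (Nat.pair x.unpair.2.unpair.1 x.unpair.2.unpair.2) = x := by
  rw [Nat.pair_unpair, Nat.pair_unpair]

theorem qdetect_of_launched {e r p : ℕ} (h : ms e (r + 1) = some (p, r)) :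
    qdetect e (qn e r) = some p := by
  unfold qdetect
  rw [if_pos (by simp [qn, Nat.unpair_pair])]
  simp only [qn, Nat.unpair_pair]
  rw [h]
  simp

theorem qdetect_some {e x p : ℕ} (h : qdetect e x = some p) :
    ∃ r, x = qn e r ∧ ms e (r + 1) = some (p, r) := by
  unfold qdetect at h
  by_cases h1 : x.unpair.1 = e ∧ x.unpair.2.unpair.1 = 1
  · rw [if_pos h1] at h
    refine ⟨x.unpair.2.unpair.2, ?_, ?_⟩
    · rw [qn, ← h1.1, ← h1.2]
      exact (unpair3 x).symm
    · cases hm : ms e (x.unpair.2.unpair.2 + 1) with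
      | none =>
        simp only [hm] at h
        exact nomatch h
      | some pt =>
        simp only [hm] at h
        by_cases h2 : pt.2 = x.unpair.2.unpair.2
        · rw [if_pos h2] at h
          have h3 : pt.1 = p := Option.some.inj h
          show some pt = some (p, x.unpair.2.unpair.2)
          rw [← h3, ← h2]
        · rw [if_neg h2] at h
          exact absurd h (by simp)
  · rw [if_neg h1] at h; exact absurd h (by simp)

theorem Fu_c_of_qdetect_none {e x : ℕ} (h : qdetect e x = none) :
    Fu (Nat.pair (Nat.pair 0 e) x) = Part.some (cval e x) := by
  refine Part.eq_some_iff.2 (Fu_mem_iff.2 ⟨0, ?_⟩)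
  simp [Fu', Nat.unpair_pair, h]

theorem Fu_c_launched {e r p : ℕ} (h : ms e (r + 1) = some (p, r)) :
    Fu (Nat.pair (Nat.pair 0 e) (qn e r)) =
      (eval (Denumerable.ofNat Code p) (qn e r)).map (fun v => if v = 0 then 1 else 0) := by
  have hF : ∀ k, Fu' (Nat.pair (Nat.pair 0 e) (qn e r)) k =
      (evaln k (Denumerable.ofNat Code p) (qn e r)).map (fun v => if v = 0 then 1 else 0) := by
    intro k
    unfold Fu'
    rw [if_pos (by simp [Nat.unpair_pair])]
    simp only [Nat.unpair_pair]
    rw [qdetect_of_launched h]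
  apply Part.ext
  intro a
  rw [Fu_mem_iff]
  constructor
  · rintro ⟨k, hk⟩
    rw [hF] at hk
    simp only [Option.mem_def, Option.map_eq_some_iff] at hk
    obtain ⟨v, hv, rfl⟩ := hk
    exact (Part.mem_map_iff _).2 ⟨v, evaln_sound (Option.mem_def.2 hv), rfl⟩
  · intro ha
    obtain ⟨v, hv, rfl⟩ := (Part.mem_map_iff _).1 ha
    obtain ⟨k, hk⟩ := evaln_complete.1 hv
    refine ⟨k, ?_⟩
    rw [hF]
    simp only [Option.mem_def, Option.map_eq_some_iff]
    exact ⟨v, Option.mem_def.1 hk, rfl⟩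


/-! ### Language-level semantics -/

theorem unpair4 (x : ℕ) :
    Nat.pair x.unpair.1 (Nat.pair x.unpair.2.unpair.1
      (Nat.pair x.unpair.2.unpair.2.unpair.1 x.unpair.2.unpair.2.unpair.2)) = x := by
  rw [Nat.pair_unpair, Nat.pair_unpair, Nat.pair_unpair]

theorem btest_iff {e s x : ℕ} :
    btest e s x = true ↔ x ∈ sigs e (s + 1) ∨ ∃ j, x = tw e s j := by
  unfold btest
  rw [Bool.or_eq_true, memb_iff]
  constructor
  · rintro (h | h)
    · exact Or.inl h
    · right
      simp only [Bool.and_eq_true, decide_eq_true_iff] at h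
      obtain ⟨⟨h1, h2⟩, h3⟩ := h
      refine ⟨x.unpair.2.unpair.2.unpair.2, ?_⟩
      rw [tw, ← h1, ← h2, ← h3]
      exact (unpair4 x).symm
  · rintro (h | ⟨j, rfl⟩)
    · exact Or.inl h
    · right
      simp [tw, Nat.unpair_pair]

/-- The branch language for a stalled query launched at stage `s`. -/
theorem mem_cset_bIdx' {e s x : ℕ} :
    x ∈ Cset (bIdx e s) ↔ x ∈ sigs e (s + 1) ∨ ∃ j, x = tw e s j := by
  rw [mem_cset_bIdx, btest_iff]

/-- A stall: some launched query diverges. -/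
def Stalls (e : ℕ) : Prop :=
  ∃ t p, Launch e t p ∧ eval (Denumerable.ofNat Code p) (qn e t) = Part.none

theorem cindex_cIdx {e : ℕ} (h : ¬ Stalls e) : CIndex (cIdx e) := by
  intro x
  rw [phi_cIdx]
  cases hq : qdetect e x with
  | none =>
    rw [Fu_c_of_qdetect_none hq]
    by_cases hc : (x.unpair.1 = e ∧ x.unpair.2.unpair.1 = 0 ∧ ms e x.unpair.2.unpair.2 = none)
    · right; rw [cval, if_pos hc]
    · left; rw [cval, if_neg hc]
  | some p =>
    obtain ⟨r, rfl, hm⟩ := qdetect_some hq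
    rw [Fu_c_launched hm]
    have hL : Launch e r p := launch_of_pending hm
    have hne : eval (Denumerable.ofNat Code p) (qn e r) ≠ Part.none := by
      intro hcon; exact h ⟨r, p, hL, hcon⟩
    have hd : (eval (Denumerable.ofNat Code p) (qn e r)).Dom := by
      by_contra h2
      exact hne (Part.eq_none_iff'.2 h2)
    obtain ⟨v, hv⟩ := Part.dom_iff_mem.1 hd
    rw [Part.eq_some_iff.2 hv, Part.map_some]
    by_cases hv0 : v = 0
    · right; rw [if_pos hv0]
    · left; rw [if_neg hv0]

theorem cset_cIdx (e : ℕ) : Cset (cIdx e) = emitted e := by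
  ext x
  rw [Cset, Set.mem_setOf_eq, phi_cIdx]
  cases hq : qdetect e x with
  | some p =>
    obtain ⟨r, rfl, hm⟩ := qdetect_some hq
    rw [Fu_c_launched hm]
    have hL : Launch e r p := launch_of_pending hm
    constructor
    · intro h
      have h1 : (1 : ℕ) ∈ (eval (Denumerable.ofNat Code p) (qn e r)).map
          (fun v => if v = 0 then 1 else 0) := by
        rw [h]; exact Part.mem_some 1
      obtain ⟨v, hv, hv1⟩ := (Part.mem_map_iff _).1 h1
      have hv0 : v = 0 := by
        by_contra h2
        rw [if_neg h2] at hv1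
        omega
      exact qn_mem_emitted.2 ⟨p, hL, Part.eq_some_iff.2 (hv0 ▸ hv)⟩
    · intro h
      obtain ⟨p', hL', hev'⟩ := qn_mem_emitted.1 h
      have hpp : p' = p := launch_unique hL' hL
      subst hpp
      rw [hev', Part.map_some]
      simp
  | none =>
    rw [Fu_c_of_qdetect_none hq]
    constructor
    · intro h
      have h1 : cval e x = 1 := Part.some_inj.1 h
      by_cases hc : (x.unpair.1 = e ∧ x.unpair.2.unpair.1 = 0 ∧ ms e x.unpair.2.unpair.2 = none)
      · obtain ⟨h2, h3, h4⟩ := hc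
        have hx : x = pl e x.unpair.2.unpair.2 := by
          rw [pl, ← h2, ← h3]
          exact (unpair3 x).symm
        rw [hx]
        exact pl_mem_emitted.2 h4
      · rw [cval, if_neg hc] at h1; omega
    · intro h
      rcases emitted_shape h with ⟨r, rfl⟩ | ⟨r, rfl⟩
      · have h4 : ms e r = none := pl_mem_emitted.1 h
        have h5 : cval e (pl e r) = 1 := by
          rw [cval, if_pos (by simp [pl, Nat.unpair_pair, h4])]
        rw [h5]
      · exfalso
        obtain ⟨p, hL, _⟩ := qn_mem_emitted.1 h
        have h6 := qdetect_of_launched hL.2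
        rw [hq] at h6
        exact nomatch h6

/-! ### The class -/

noncomputable def target (e : ℕ) : Set ℕ :=
  letI := Classical.dec (Stalls e)
  if h : Stalls e then Cset (bIdx e h.choose) else Cset (cIdx e)

def langClass : Set (Set ℕ) := {L | ∃ e, L = target e}

/-- Recursiveness from a C-index. -/
theorem recLang_of_cindex {c : ℕ} (hc : CIndex c) : RecLang (Cset c) := by
  classical
  refine ⟨fun x => decide (x ∈ Cset c), ?_, fun x => (decide_eq_true_iff (p := x ∈ Cset c)).symm⟩
  have hpc : Partrec (phi c) := Partrec.nat_iff.2 (Nat.Partrec.Code.exists_code.2 ⟨_, rfl⟩)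
  have hmap : Partrec fun x => (phi c x).map (fun v => decide (v = 1)) :=
    hpc.map ((Primrec.eq.comp Primrec.id (Primrec.const 1)).decide.to_comp.comp
      Computable.snd).to₂
  apply hmap.of_eq
  intro x
  rcases hc x with h | h
  · rw [h, Part.map_some]
    have hx : x ∉ Cset c := by
      intro hx
      rw [Cset, Set.mem_setOf_eq, h] at hx
      exact absurd (Part.some_inj.1 hx) (by omega)
    simp [hx]
  · rw [h, Part.map_some]
    have hx : x ∈ Cset c := h
    simp [hx]


/-! ### The iterative learner -/

theorem const_le_encode (n : ℕ) : n ≤ Encodable.encode (Code.const n) := by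
  induction n with
  | zero => exact Nat.zero_le _
  | succ n ih =>
    have h := (encode_lt_comp Code.succ (Code.const n)).2
    calc n + 1 ≤ Encodable.encode (Code.const n) + 1 := by omega
    _ ≤ Encodable.encode (Code.comp Code.succ (Code.const n)) := h
    _ = Encodable.encode (Code.const (n + 1)) := rfl

theorem lt_encode_curry (c : Code) (n : ℕ) : n < Encodable.encode (c.curry n) := by
  have h1 := (encode_lt_pair (Code.const n) Code.id).1
  have h2 := (encode_lt_comp c (Code.pair (Code.const n) Code.id)).2
  have h3 := const_le_encode n
  unfold Code.curry
  omega

theorem encode_curry_pos (c : Code) (n : ℕ) : 0 < Encodable.encode (c.curry n) := by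
  have h2 := (encode_lt_comp c (Code.pair (Code.const n) Code.id)).2
  unfold Code.curry
  omega

noncomputable def isB (z : ℕ) : Bool :=
  (List.range (z + 1)).foldr
    (fun w b =>
      (decide (Encodable.encode (uM.curry w) = z) && decide (w.unpair.1 = 1)) || b) false

theorem foldr_or_iff {P : ℕ → Bool} : ∀ {l : List ℕ},
    (l.foldr (fun w b => P w || b) false = true ↔ ∃ w ∈ l, P w = true) := by
  intro l
  induction l with
  | nil => simp
  | cons a l ih =>
    simp only [List.foldr_cons, Bool.or_eq_true, ih]
    constructor
    · rintro (h | ⟨w, hw, hP⟩)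
      · exact ⟨a, List.mem_cons_self, h⟩
      · exact ⟨w, List.mem_cons_of_mem a hw, hP⟩
    · rintro ⟨w, hw, hP⟩
      rcases List.mem_cons.1 hw with rfl | hw
      · exact Or.inl hP
      · exact Or.inr ⟨w, hw, hP⟩

theorem isB_iff {z : ℕ} :
    isB z = true ↔ ∃ w, Encodable.encode (uM.curry w) = z ∧ w.unpair.1 = 1 := by
  unfold isB
  rw [foldr_or_iff]
  constructor
  · rintro ⟨w, _, hP⟩
    simp only [Bool.and_eq_true, decide_eq_true_iff] at hP
    exact ⟨w, hP.1, hP.2⟩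
  · rintro ⟨w, h1, h2⟩
    refine ⟨w, ?_, by simp [h1, h2]⟩
    rw [List.mem_range]
    have := lt_encode_curry uM w
    omega

theorem isB_bIdx (e s : ℕ) : isB (bIdx e s) = true :=
  isB_iff.2 ⟨Nat.pair 1 (Nat.pair e s), rfl, by simp [Nat.unpair_pair]⟩

theorem not_isB_cIdx (e : ℕ) : ¬ isB (cIdx e) = true := by
  intro h
  obtain ⟨w, h1, h2⟩ := isB_iff.1 h
  have h3 : uM.curry w = uM.curry (Nat.pair 0 e) :=
    Encodable.encode_injective (by rw [h1]; rfl)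
  have h4 := (curry_inj h3).2
  rw [h4] at h2
  simp [Nat.unpair_pair] at h2

theorem not_isB_zero : ¬ isB 0 = true := by
  intro h
  obtain ⟨w, h1, _⟩ := isB_iff.1 h
  have := encode_curry_pos uM w
  omega

noncomputable def fRaw : Option (ℕ × Option ℕ) → ℕ
  | none => 0
  | some (prev, none) => prev
  | some (prev, some x) =>
    if x.unpair.2.unpair.1 = 2 then bIdx x.unpair.1 x.unpair.2.unpair.2.unpair.1
    else if isB prev then prev else cIdx x.unpair.1

noncomputable def fIt (n : ℕ) : ℕ :=
  Option.casesOn (Encodable.decode (α := Option (ℕ × Option ℕ)) n) 0 fRaw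

noncomputable def hIt : Learner := fun n => Part.some (fIt n)


theorem cIdx_primrec : Primrec cIdx :=
  Primrec.encode.comp (primrec₂_curry.comp (Primrec.const uM)
    (Primrec₂.natPair.comp (Primrec.const 0) Primrec.id))

theorem bIdx_primrec : Primrec₂ bIdx :=
  Primrec.encode.comp (primrec₂_curry.comp (Primrec.const uM)
    (Primrec₂.natPair.comp (Primrec.const 1)
      (Primrec₂.natPair.comp Primrec.fst Primrec.snd)))

theorem isB_primrec : Primrec isB := by
  have h : Primrec₂ fun (z : ℕ) (p : ℕ × Bool) =>
      ((decide (Encodable.encode (uM.curry p.1) = z) && decide (p.1.unpair.1 = 1)) || p.2) :=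
    Primrec.or.comp
      (Primrec.and.comp
        (Primrec.eq.comp
          (Primrec.encode.comp
            (primrec₂_curry.comp (Primrec.const uM) (Primrec.fst.comp Primrec.snd)))
          Primrec.fst).decide
        (Primrec.eq.comp
          (Primrec.fst.comp (Primrec.unpair.comp (Primrec.fst.comp Primrec.snd)))
          (Primrec.const 1)).decide)
      (Primrec.snd.comp Primrec.snd)
  exact Primrec.list_foldr (Primrec.list_range.comp Primrec.succ) (Primrec.const false) h

theorem fRaw_primrec : Primrec fRaw := by
  have hinner : Primrec₂ fun (pr : Option (ℕ × Option ℕ) × (ℕ × Option ℕ)) (x : ℕ) =>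
      (if x.unpair.2.unpair.1 = 2 then bIdx x.unpair.1 x.unpair.2.unpair.2.unpair.1
       else if isB pr.2.1 = true then pr.2.1 else cIdx x.unpair.1) := by
    have hx : Primrec fun q : (Option (ℕ × Option ℕ) × (ℕ × Option ℕ)) × ℕ => q.2 :=
      Primrec.snd
    have hxu := Primrec.unpair.comp hx
    have hx1 := Primrec.fst.comp hxu
    have hx2u := Primrec.unpair.comp (Primrec.snd.comp hxu)
    have hx21 := Primrec.fst.comp hx2u
    have hx22u := Primrec.unpair.comp (Primrec.snd.comp hx2u)
    have hx221 := Primrec.fst.comp hx22u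
    have hprev : Primrec fun q : (Option (ℕ × Option ℕ) × (ℕ × Option ℕ)) × ℕ => q.1.2.1 :=
      Primrec.fst.comp (Primrec.snd.comp Primrec.fst)
    exact Primrec.ite (Primrec.eq.comp hx21 (Primrec.const 2))
      (bIdx_primrec.comp hx1 hx221)
      (Primrec.ite (Primrec.eq.comp (isB_primrec.comp hprev) (Primrec.const true))
        hprev (cIdx_primrec.comp hx1))
  have hmid : Primrec₂ fun (o : Option (ℕ × Option ℕ)) (pr : ℕ × Option ℕ) =>
      (Option.casesOn (motive := fun _ => ℕ) pr.2 pr.1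
        (fun x => if x.unpair.2.unpair.1 = 2 then bIdx x.unpair.1 x.unpair.2.unpair.2.unpair.1
          else if isB pr.1 = true then pr.1 else cIdx x.unpair.1)) :=
    Primrec.option_casesOn (Primrec.snd.comp Primrec.snd) (Primrec.fst.comp Primrec.snd)
      hinner
  have h : Primrec fun o : Option (ℕ × Option ℕ) =>
      (Option.casesOn (motive := fun _ => ℕ) o 0
        (fun pr => Option.casesOn (motive := fun _ => ℕ) pr.2 pr.1
          (fun x => if x.unpair.2.unpair.1 = 2 then
              bIdx x.unpair.1 x.unpair.2.unpair.2.unpair.1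
            else if isB pr.1 = true then pr.1 else cIdx x.unpair.1))) :=
    Primrec.option_casesOn Primrec.id (Primrec.const 0) hmid
  exact h.of_eq fun o => by
    rcases o with _ | ⟨prev, _ | x⟩ <;> rfl

theorem fIt_primrec : Primrec fIt := by
  have h : Primrec₂ fun (_ : ℕ) (o : Option (ℕ × Option ℕ)) => fRaw o :=
    fRaw_primrec.comp Primrec.snd
  exact Primrec.option_casesOn Primrec.decode (Primrec.const 0) h

theorem hIt_partrec : PartComputable hIt := by
  have h1 : Computable fIt := fIt_primrec.to_comp
  have h2 : Partrec hIt := h1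
  exact Partrec.nat_iff.1 h2

noncomputable def itState (T : Text) : ℕ → ℕ
  | 0 => 0
  | n + 1 => fRaw (some (itState T n, T n))

theorem itop_hIt (T : Text) : ∀ n, Itop hIt T n = Part.some (itState T n) := by
  intro n
  induction n with
  | zero =>
    show hIt (Encodable.encode (none : Option (ℕ × Option ℕ))) = _
    unfold hIt fIt
    rw [Encodable.encodek]
    rfl
  | succ n ih =>
    show (Itop hIt T n).bind _ = _
    rw [ih, Part.bind_some]
    show Part.some (fIt (Encodable.encode (some (itState T n, T n)))) = _
    unfold fIt
    rw [Encodable.encodek]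
    rfl

theorem fRaw_pause (prev : ℕ) : fRaw (some (prev, none)) = prev := rfl

theorem fRaw_some_some (prev x : ℕ) : fRaw (some (prev, some x)) =
    if x.unpair.2.unpair.1 = 2 then bIdx x.unpair.1 x.unpair.2.unpair.2.unpair.1
    else if isB prev then prev else cIdx x.unpair.1 := rfl

theorem fRaw_tw (prev e s j : ℕ) : fRaw (some (prev, some (tw e s j))) = bIdx e s := by
  rw [fRaw_some_some]
  rw [if_pos (by simp [tw, Nat.unpair_pair])]
  simp [tw, Nat.unpair_pair]

theorem fRaw_main {e prev x : ℕ} (hx : (∃ r, x = pl e r) ∨ (∃ r, x = qn e r)) :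
    fRaw (some (prev, some x)) = if isB prev then prev else cIdx e := by
  rw [fRaw_some_some]
  rcases hx with ⟨r, rfl⟩ | ⟨r, rfl⟩
  · rw [if_neg (by simp [pl, Nat.unpair_pair])]
    simp [pl, Nat.unpair_pair]
  · rw [if_neg (by simp [qn, Nat.unpair_pair])]
    simp [qn, Nat.unpair_pair]

/-! ### The positive side: `langClass` is iteratively learnable -/

theorem learns_target (e : ℕ) : Learns Itop ExC hIt (target e) := by
  intro T hT
  unfold target at hT
  by_cases hS : Stalls e
  · rw [dif_pos hS] at hT
    set t := hS.choose with ht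
    -- the first twig appears somewhere in the text
    have htw : tw e t 0 ∈ content T := by
      rw [hT, mem_cset_bIdx']
      exact Or.inr ⟨0, rfl⟩
    obtain ⟨n₂, hn₂⟩ := htw
    -- after n₂ the state is locked to bIdx e t
    have hlock : ∀ n, n₂ + 1 ≤ n → itState T n = bIdx e t := by
      intro n hn
      induction n with
      | zero => omega
      | succ n ih =>
        rcases eq_or_lt_of_le hn with h1 | h1
        · have h2 : n₂ = n := by omega
          subst h2
          show fRaw (some (itState T n₂, T n₂)) = _
          rw [hn₂, fRaw_tw]
        · have hprev : itState T n = bIdx e t := ih (by omega)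
          show fRaw (some (itState T n, T n)) = _
          cases hTn : T n with
          | none => rw [fRaw_pause, hprev]
          | some x =>
            have hxc : x ∈ content T := ⟨n, hTn⟩
            rw [hT, mem_cset_bIdx'] at hxc
            rcases hxc with hx | ⟨j, rfl⟩
            · have hshape := emitted_shape (mem_emitted_of_mem_sigs hx)
              rw [fRaw_main hshape, hprev, if_pos (isB_bIdx e t)]
            · rw [fRaw_tw]
    refine ⟨n₂ + 1, ?_, bIdx e t, ?_, cindex_bIdx e t, ?_⟩
    · intro n hn
      rw [itop_hIt, itop_hIt, hlock n hn, hlock (n₂ + 1) le_rfl]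
    · rw [itop_hIt, hlock (n₂ + 1) le_rfl]
    · rw [hT]
  · rw [dif_neg hS] at hT
    rw [cset_cIdx] at hT
    have hpl : pl e 0 ∈ content T := by
      rw [hT]
      exact pl_mem_emitted.2 (ms_zero e)
    obtain ⟨n₁, hn₁⟩ := hpl
    -- invariant: the state is never a b-index, and is 0 or cIdx e
    have hinv : ∀ n, ¬ isB (itState T n) = true := by
      intro n
      induction n with
      | zero => exact not_isB_zero
      | succ n ih =>
        show ¬ isB (fRaw (some (itState T n, T n))) = true
        cases hTn : T n with
        | none => rw [fRaw_pause]; exact ih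
        | some x =>
          have hxc : x ∈ content T := ⟨n, hTn⟩
          rw [hT] at hxc
          rw [fRaw_main (emitted_shape hxc)]
          by_cases hb : isB (itState T n) = true
          · rw [if_pos hb]; exact ih
          · rw [if_neg hb]; exact not_isB_cIdx e
    have hlock : ∀ n, n₁ + 1 ≤ n → itState T n = cIdx e := by
      intro n hn
      induction n with
      | zero => omega
      | succ n ih =>
        rcases eq_or_lt_of_le hn with h1 | h1
        · have h2 : n₁ = n := by omega
          subst h2
          show fRaw (some (itState T n₁, T n₁)) = _
          rw [hn₁, fRaw_main (Or.inl ⟨0, rfl⟩), if_neg (hinv n₁)]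
        · have hprev : itState T n = cIdx e := ih (by omega)
          show fRaw (some (itState T n, T n)) = _
          cases hTn : T n with
          | none => rw [fRaw_pause, hprev]
          | some x =>
            have hxc : x ∈ content T := ⟨n, hTn⟩
            rw [hT] at hxc
            rw [fRaw_main (emitted_shape hxc), if_neg (hinv n)]
    refine ⟨n₁ + 1, ?_, cIdx e, ?_, cindex_cIdx hS, ?_⟩
    · intro n hn
      rw [itop_hIt, itop_hIt, hlock n hn, hlock (n₁ + 1) le_rfl]
    · rw [itop_hIt, hlock (n₁ + 1) le_rfl]
    · rw [hT, cset_cIdx]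

theorem target_recLang (e : ℕ) : RecLang (target e) := by
  unfold target
  by_cases hS : Stalls e
  · rw [dif_pos hS]
    exact recLang_of_cindex (cindex_bIdx e _)
  · rw [dif_neg hS]
    exact recLang_of_cindex (cindex_cIdx hS)

theorem pos_side : langClass ∈ LearnableREC PartComputable Itop ExC := by
  refine ⟨?_, hIt, hIt_partrec, ?_⟩
  · rintro L ⟨e, rfl⟩
    exact target_recLang e
  · rintro L ⟨e, rfl⟩
    exact learns_target e


/-! ### The negative side: no Gold-style CInd-Bc learner -/

/-- The branch text enumeration for a stalled query. -/
def enumB (e t k : ℕ) : ℕ :=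
  if k % 2 = 0 then tw e t (k / 2)
  else (sigs e (t + 1)).getD ((k / 2) % (sigs e (t + 1)).length) (pl e t)

def TB (e t : ℕ) : Text := fun n =>
  if n < qs e (t + 1) then (sigs e (t + 1))[n]? else some (enumB e t (n - qs e (t + 1)))

theorem sigs_launch_len {e t p : ℕ} (hL : Launch e t p) :
    0 < (sigs e (t + 1)).length := by
  rw [wait_sigma hL.1]
  simp

theorem pl_mem_sigs_launch {e t p : ℕ} (hL : Launch e t p) : pl e t ∈ sigs e (t + 1) := by
  rw [wait_sigma hL.1]
  simp

theorem content_TB {e t p : ℕ} (hL : Launch e t p) :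
    content (TB e t) = Cset (bIdx e t) := by
  ext x
  rw [mem_cset_bIdx']
  constructor
  · rintro ⟨n, hn⟩
    unfold TB at hn
    by_cases h1 : n < qs e (t + 1)
    · rw [if_pos h1] at hn
      obtain ⟨hlt, hval⟩ := List.getElem?_eq_some_iff.1 hn
      exact Or.inl (hval ▸ List.getElem_mem hlt)
    · rw [if_neg h1] at hn
      have hx : x = enumB e t (n - qs e (t + 1)) := (Option.some.inj hn).symm
      unfold enumB at hx
      by_cases h2 : (n - qs e (t + 1)) % 2 = 0
      · rw [if_pos h2] at hx
        exact Or.inr ⟨_, hx⟩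
      · rw [if_neg h2] at hx
        left
        rw [hx, List.getD_eq_getElem?_getD]
        have hlen := sigs_launch_len hL
        have hmod : (n - qs e (t + 1)) / 2 % (sigs e (t + 1)).length <
            (sigs e (t + 1)).length := Nat.mod_lt _ hlen
        rw [List.getElem?_eq_getElem hmod]
        exact List.getElem_mem hmod
  · intro hx
    rcases hx with hx | ⟨j, rfl⟩
    · obtain ⟨i, hi, hix⟩ := List.mem_iff_getElem.1 hx
      refine ⟨qs e (t + 1) + (2 * i + 1), ?_⟩
      unfold TB
      rw [if_neg (by omega)]
      have h2 : qs e (t + 1) + (2 * i + 1) - qs e (t + 1) = 2 * i + 1 := by omega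
      rw [h2]
      unfold enumB
      rw [if_neg (by omega)]
      have h3 : (2 * i + 1) / 2 = i := by omega
      rw [h3, Nat.mod_eq_of_lt hi, List.getD_eq_getElem?_getD, List.getElem?_eq_getElem hi,
        hix]
      rfl
    · refine ⟨qs e (t + 1) + 2 * j, ?_⟩
      unfold TB
      rw [if_neg (by omega)]
      have h2 : qs e (t + 1) + 2 * j - qs e (t + 1) = 2 * j := by omega
      rw [h2]
      unfold enumB
      rw [if_pos (by omega)]
      have h3 : 2 * j / 2 = j := by omega
      rw [h3]

theorem initSeg_TB {e t : ℕ} (hm : qs e (t + 1) ≤ (sigs e (t + 1)).length) :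
    initSeg (TB e t) (qs e (t + 1)) =
      ((sigs e (t + 1)).take (qs e (t + 1))).map Option.some := by
  apply List.ext_getElem?
  intro n
  rw [initSeg, List.getElem?_map, List.getElem?_map]
  by_cases hn : n < qs e (t + 1)
  · rw [List.getElem?_range hn, List.getElem?_take_of_lt hn]
    have hn2 : n < (sigs e (t + 1)).length := by omega
    rw [List.getElem?_eq_getElem hn2]
    simp only [Option.map_some]
    unfold TB
    rw [if_pos hn, List.getElem?_eq_getElem hn2]
  · rw [List.getElem?_eq_none (by simpa using hn), List.getElem?_eq_none]
    · rfl
    · simp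
      omega

/-- Extracting the hypothesis a launched query was asked of. -/
theorem gop_launch {h : Learner} {ch : Code} (hch : eval ch = h) {t p : ℕ}
    (hL : Launch (Encodable.encode ch) t p) {T : Text}
    (hpre : initSeg T (qs (Encodable.encode ch) (t + 1)) =
      ((sigs (Encodable.encode ch) (t + 1)).take
        (qs (Encodable.encode ch) (t + 1))).map Option.some) :
    Gop h T (qs (Encodable.encode ch) (t + 1)) = Part.some p := by
  set e := Encodable.encode ch with he
  obtain ⟨_, hm, hev⟩ := launch_data hL
  rw [Gop, ← hch]
  apply Part.eq_some_iff.2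
  have h2 : p ∈ eval (Denumerable.ofNat Code e) (inputOf (sigs e (t + 1)) (qs e (t + 1))) :=
    evaln_sound (Option.mem_def.2 hev)
  rw [he, Denumerable.ofNat_encode, inputOf_eq_take hm] at h2
  rw [hpre]
  exact h2

/-- Case B facts: eventual permanent waiting. -/
theorem q_const {e s₀ : ℕ} (hs : ∀ u, s₀ ≤ u → ms e u = none) :
    ∀ u, s₀ ≤ u → qs e u = qs e s₀ := by
  intro u
  induction u with
  | zero => intro h; rw [Nat.le_zero.1 h]
  | succ u ih =>
    intro h
    rcases eq_or_lt_of_le h with h1 | h1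
    · rw [← h1]
    · have h2 : s₀ ≤ u := by omega
      rcases wait_cases (hs u h2) with ⟨_, h3⟩ | ⟨p, h3, _⟩
      · rw [h3]; exact ih h2
      · have := hs (u + 1) (by omega)
        rw [this] at h3
        exact absurd h3 (by simp)

theorem len_grow {e s₀ : ℕ} (hs : ∀ u, s₀ ≤ u → ms e u = none) :
    ∀ n, n ≤ (sigs e (s₀ + n)).length := by
  intro n
  induction n with
  | zero => omega
  | succ n ih =>
    have h1 : sigs e (s₀ + n + 1) = sigs e (s₀ + n) ++ [pl e (s₀ + n)] :=
      wait_sigma (hs (s₀ + n) (by omega))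
    have : s₀ + (n + 1) = s₀ + n + 1 := by omega
    rw [this, h1]
    simp only [List.length_append, List.length_cons, List.length_nil]
    omega

/-- In case C, launches occur cofinally. -/
theorem launches_cofinal {e : ℕ} (hnS : ¬ Stalls e)
    (hW : ∀ s, ∃ u, s ≤ u ∧ ms e u ≠ none) :
    ∀ s, ∃ t q, s ≤ t ∧ Launch e t q := by
  intro s
  obtain ⟨u, hu, hne⟩ := hW s
  obtain ⟨⟨p, t⟩, hpt⟩ := Option.ne_none_iff_exists'.1 hne
  have hL : Launch e t p := launch_of_pending hpt
  -- this query concludes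
  have hdom : (eval (Denumerable.ofNat Code p) (qn e t)).Dom := by
    by_contra h2
    exact hnS ⟨t, p, hL, Part.eq_none_iff'.2 h2⟩
  obtain ⟨v, hv⟩ := Part.dom_iff_mem.1 hdom
  obtain ⟨k, hk⟩ := evaln_complete.1 hv
  obtain ⟨u', hu', hpend, hev⟩ := conclude_of_halts (Option.mem_def.1 hk) hpt
  have hnone : ms e (u' + 1) = none := (run_conclude hpend hev).1
  -- a later pending state must come from a later launch
  obtain ⟨u'', hu'', hne''⟩ := hW (u' + 2)
  obtain ⟨⟨p'', t''⟩, hpt''⟩ := Option.ne_none_iff_exists'.1 hne''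
  have hL'' : Launch e t'' p'' := launch_of_pending hpt''
  refine ⟨t'', p'', ?_, hL''⟩
  by_contra h3
  push_neg at h3
  -- then t'' < s ≤ u ≤ u' + 1 ≤ u'', so pending at u' + 1: contradiction
  have h4 : ms e (u' + 1) = some (p'', t'') := by
    apply pending_back hpt'' (u' + 1)
    · by_contra h5
      push_neg at h5
      -- t'' ≥ u' + 1 ≥ u ≥ s, contradiction with h3
      omega
    · omega
  rw [hnone] at h4
  exact nomatch h4

theorem pointer_unbounded {e : ℕ} (hnS : ¬ Stalls e)
    (hW : ∀ s, ∃ u, s ≤ u ∧ ms e u ≠ none) :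
    ∀ N, ∃ t q, Launch e t q ∧ N ≤ qs e (t + 1) := by
  intro N
  induction N with
  | zero =>
    obtain ⟨t, q, _, hL⟩ := launches_cofinal hnS hW 0
    exact ⟨t, q, hL, by omega⟩
  | succ N ih =>
    obtain ⟨t, q, hL, hq⟩ := ih
    obtain ⟨t', q', ht', hL'⟩ := launches_cofinal hnS hW (t + 1)
    refine ⟨t', q', hL', ?_⟩
    have h1 : qs e (t + 1) ≤ qs e t' := qs_mono ht'
    have h2 : qs e t' < qs e (t' + 1) := (launch_data hL').1
    omega

theorem neg_side : langClass ∉ LearnableREC PartComputable Gop (andRes CIndRes BcC) := by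
  rintro ⟨_, h, hpc, hlearns⟩
  obtain ⟨ch, hch⟩ := Nat.Partrec.Code.exists_code.1 hpc
  set e := Encodable.encode ch with he
  have hlearn := hlearns _ (⟨e, rfl⟩ : target e ∈ langClass)
  by_cases hS : Stalls e
  · -- Case A: a stalled query; kill CIndRes on the branch language.
    obtain ⟨p, hL, hdiv⟩ := hS.choose_spec
    set t := hS.choose with ht
    have htgt : target e = Cset (bIdx e t) := by
      unfold target
      rw [dif_pos hS]
    have hcontent : content (TB e t) = target e := by
      rw [htgt]; exact content_TB hL
    obtain ⟨hCInd, _⟩ := hlearn (TB e t) hcontent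
    have hgop : Gop h (TB e t) (qs e (t + 1)) = Part.some p :=
      gop_launch hch hL (initSeg_TB (launch_data hL).2.1)
    have hCI : CIndex p := hCInd _ p hgop
    rcases hCI (qn e t) with h1 | h1 <;>
    · rw [show phi p (qn e t) = eval (Denumerable.ofNat Code p) (qn e t) from rfl, hdiv] at h1
      exact absurd h1 (by simp [Part.eq_some_iff])
  · have htgt : target e = Cset (cIdx e) := by
      unfold target
      rw [dif_neg hS]
    have hcontent : content (TT e) = target e := by
      rw [htgt, cset_cIdx]; exact content_TT e
    obtain ⟨hCInd, hBcC⟩ := hlearn (TT e) hcontent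
    obtain ⟨n₀, hn₀⟩ := hBcC
    by_cases hW : ∃ s₀, ∀ u, s₀ ≤ u → ms e u = none
    · -- Case B: eventual permanent waiting; the learner diverges cofinally.
      obtain ⟨s₀, hs₀⟩ := hW
      set n := max n₀ (qs e s₀ + 1) with hn
      obtain ⟨e', hsome, _, _⟩ := hn₀ n (le_max_left _ _)
      rw [Gop, ← hch] at hsome
      obtain ⟨k, hk⟩ := evaln_complete.1 (Part.eq_some_iff.1 hsome)
      -- pick a late waiting stage with a long enough prefix
      set u := max (s₀ + n) k with hu
      have hs₀u : s₀ ≤ u := by omega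
      have hmu : ms e u = none := hs₀ u hs₀u
      have hlen : n ≤ (sigs e u).length := by
        have h1 := len_grow hs₀ n
        have h2 : (sigs e (s₀ + n)).length ≤ (sigs e u).length :=
          (sigs_prefix (by omega)).length_le
        omega
      have hq : qs e u < n := by
        rw [q_const hs₀ u hs₀u]
        omega
      have hlaunch := wait_launches hmu hq
        (by simp only [List.length_append, List.length_cons, List.length_nil]; omega)
        (m := n) ?_
      · have h9 := hs₀ (u + 1) (by omega)
        rw [h9] at hlaunch
        simp at hlaunch
      · -- the prefix the construction feeds to `h` is the real text prefix
        have htake : (sigs e u ++ [pl e u]).take n = (sigs e u).take n :=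
          List.take_append_of_le_length hlen
        have hlen2 : n ≤ (sigs e u ++ [pl e u]).length := by
          simp only [List.length_append, List.length_cons, List.length_nil]
          omega
        rw [inputOf_eq_take hlen2, htake, ← inputOf_eq_take hlen, inputOf_initSeg hlen]
        have h3 := evaln_mono (le_max_right (s₀ + n) k) (Option.mem_def.2 hk)
        rw [he, Denumerable.ofNat_encode]
        rw [Option.mem_def.1 h3]
        rfl
    · -- Case C: infinitely many launches; each defeated hypothesis kills BcC.
      push_neg at hW
      have hW' : ∀ s, ∃ u, s ≤ u ∧ ms e u ≠ none := by
        intro s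
        obtain ⟨u, hu1, hu2⟩ := hW s
        exact ⟨u, hu1, hu2⟩
      obtain ⟨t, p, hL, hq⟩ := pointer_unbounded hS hW' n₀
      set m := qs e (t + 1) with hm
      have hgop : Gop h (TT e) m = Part.some p :=
        gop_launch hch hL (initSeg_TT (launch_data hL).2.1)
      obtain ⟨e', hsome, hCI', hCset'⟩ := hn₀ m hq
      have hpe : e' = p := by
        rw [hgop] at hsome
        exact (Part.some_inj.1 hsome).symm
      subst hpe
      have hCset : Cset e' = emitted e := by
        rw [hCset', content_TT]
      have hCIp : CIndex e' := hCInd _ e' hgop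
      rcases hCIp (qn e t) with h1 | h1
      · -- the learner said "out", so the construction put it in
        have hin : qn e t ∈ emitted e := by
          apply qn_mem_emitted.2
          exact ⟨e', hL, h1⟩
        rw [← hCset] at hin
        rw [Cset, Set.mem_setOf_eq, h1] at hin
        exact absurd (Part.some_inj.1 hin) (by omega)
      · -- the learner said "in", so the construction kept it out
        have hin : qn e t ∈ Cset e' := h1
        rw [hCset] at hin
        obtain ⟨p', hL', hev'⟩ := qn_mem_emitted.1 hin
        have hpp : p' = e' := launch_unique hL' hL
        subst hpp
        rw [show phi p' (qn e t) = eval (Denumerable.ofNat Code p') (qn e t) from rfl] at h1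
        rw [hev'] at h1
        exact absurd (Part.some_inj.1 h1) (by omega)

end Separation


/-- There is a class of recursive languages in `[TxtItEx_C]_REC` but not in
`[TxtGCIndBc_C]_REC`. -/
theorem it_exC_not_g_cind_bcC :
    ∃ ℒ : Set (Set ℕ),
      ℒ ∈ LearnableREC PartComputable Itop ExC ∧
      ℒ ∉ LearnableREC PartComputable Gop (andRes CIndRes BcC) :=
  ⟨langClass, pos_side, neg_side⟩

end InductiveInference
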